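/- Every right-shift schedule is a realised schedule: for a baseline schedule s with permutation π, any position q, and any t with s_{π(q)} ≤ t ≤ L(s)_{π(q)}, there exists a scenario Δ ∈ {0,…,Δmax}^n such that R(s,Δ)_{π(k)} = RS(s,q,t)_{π(k)} for all k ≤ q. -/

import Mathlib

/-- Length of the intersection of integer intervals [a1,b1] and [a2,b2]. -/
def lenint (a1 b1 a2 b2 : ℤ) : ℤ := max 0 (min b1 b2 - max a1 a2)

/-- Realised schedule: position-indexed recursive definition.
`p` processing times (operation-indexed), `π` permutation of operations,
`s` baseline start times (operation-indexed), `Δ` deviations (operation-indexed). -/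
def realised (p : ℕ → ℤ) (π : Equiv.Perm ℕ) (s Δ : ℕ → ℤ) : ℕ → ℤ
  | 0 => s (π 0) + Δ (π 0)
  | k + 1 => max (s (π (k + 1))) (realised p π s Δ k + p (π k)) + Δ (π (k + 1))

/-- Latest start time schedule (position-indexed). -/
def latest (p : ℕ → ℤ) (π : Equiv.Perm ℕ) (s : ℕ → ℤ) (Δmax : ℤ) : ℕ → ℤ :=
  realised p π s (fun _ => Δmax)

/-- A scenario: all deviations in {0,…,Δmax}. -/
def IsScenario (Δmax : ℤ) (Δ : ℕ → ℤ) : Prop := ∀ j, 0 ≤ Δ j ∧ Δ j ≤ Δmax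

/-- Auxiliary function for the right-shift schedule: `j` is the distance from
position `q`, i.e. the value at position `q - j`. -/
def rsAux (p : ℕ → ℤ) (π : Equiv.Perm ℕ) (L : ℕ → ℤ) (q : ℕ) (t : ℤ) : ℕ → ℤ
  | 0 => t
  | j + 1 => min (L (q - (j + 1))) (rsAux p π L q t j - p (π (q - (j + 1))))

/-- Right-shift schedule (position-indexed, meaningful for positions `k ≤ q`). -/
def rightShift (p : ℕ → ℤ) (π : Equiv.Perm ℕ) (L : ℕ → ℤ) (q : ℕ) (t : ℤ) (k : ℕ) : ℤ :=
  rsAux p π L q t (q - k)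

theorem rightShift_is_realised (p s : ℕ → ℤ) (π : Equiv.Perm ℕ)
    (Δmax : ℤ) (hp : ∀ j, 0 < p j) (hΔmax : 0 ≤ Δmax)
    (hover : ∀ k, s (π k) + p (π k) ≤ s (π (k + 1)))
    (q : ℕ) (t : ℤ) (ht₁ : s (π q) ≤ t) (ht₂ : t ≤ latest p π s Δmax q) :
    ∃ Δ : ℕ → ℤ, IsScenario Δmax Δ ∧
      ∀ k ≤ q, realised p π s Δ k = rightShift p π (latest p π s Δmax) q t k := by
  classical
  set L : ℕ → ℤ := latest p π s Δmax with hLdef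
  set A : ℕ → ℤ := rsAux p π L q t with hAdef
  have hA0 : A 0 = t := rfl
  have hAsucc : ∀ j, A (j+1) = min (L (q - (j+1))) (A j - p (π (q - (j+1)))) :=
    fun j => rfl
  have hL0 : L 0 = s (π 0) + Δmax := rfl
  have hLsucc : ∀ k, L (k+1) = max (s (π (k+1))) (L k + p (π k)) + Δmax :=
    fun k => rfl
  have hsL : ∀ k, s (π k) ≤ L k := by
    intro k
    cases k with
    | zero => rw [hL0]; linarith
    | succ m =>
      rw [hLsucc]
      have := le_max_left (s (π (m+1))) (L m + p (π m))
      linarith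
  have hAL : ∀ j, j ≤ q → A j ≤ L (q - j) := by
    intro j hj
    cases j with
    | zero => simpa [hA0] using ht₂
    | succ m => rw [hAsucc]; exact min_le_left _ _
  have hsA : ∀ j, j ≤ q → s (π (q - j)) ≤ A j := by
    intro j
    induction j with
    | zero => intro _; simpa [hA0] using ht₁
    | succ m ih =>
      intro hj
      rw [hAsucc]
      refine le_min (hsL _) ?_
      have h1 : q - (m+1) + 1 = q - m := by omega
      have h2 := hover (q - (m+1))
      rw [h1] at h2
      have h3 := ih (by omega)
      have h4 := hp (π (q - m))
      linarith
  set f : ℕ → ℤ := fun k =>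
    if k = 0 then A q - s (π 0)
    else if k ≤ q then A (q - k) - max (s (π k)) (A (q - k + 1) + p (π (k-1)))
    else 0 with hfdef
  set Δ : ℕ → ℤ := fun op => f (π.symm op) with hΔdef
  have hΔπ : ∀ k, Δ (π k) = f k := by
    intro k; simp [hΔdef]
  have hf0 : f 0 = A q - s (π 0) := by simp [hfdef]
  have hfsucc : ∀ m, m + 1 ≤ q →
      f (m+1) = A (q - (m+1)) - max (s (π (m+1))) (A (q - (m+1) + 1) + p (π m)) := by
    intro m hm
    simp [hfdef, hm]
  -- key recursion at position m (for m+1 ≤ q)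
  have hrec : ∀ m, m + 1 ≤ q →
      A (q - (m+1) + 1) = min (L m) (A (q - (m+1)) - p (π m)) := by
    intro m hm
    have e1 : q - (q - (m+1) + 1) = m := by omega
    rw [hAsucc (q - (m+1)), e1]
  have hsAk : ∀ k, k ≤ q → s (π k) ≤ A (q - k) := by
    intro k hk
    have := hsA (q - k) (by omega)
    have e : q - (q - k) = k := by omega
    rwa [e] at this
  have hALk : ∀ k, k ≤ q → A (q - k) ≤ L k := by
    intro k hk
    have := hAL (q - k) (by omega)
    have e : q - (q - k) = k := by omega
    rwa [e] at this
  refine ⟨Δ, ?_, ?_⟩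
  · intro op
    have : 0 ≤ f (π.symm op) ∧ f (π.symm op) ≤ Δmax := by
      set k := π.symm op with hk
      cases k with
      | zero =>
        rw [hf0]
        constructor
        · have := hsAk 0 (by omega)
          simp only [Nat.sub_zero] at this
          linarith
        · have := hALk 0 (by omega)
          simp only [Nat.sub_zero] at this
          rw [hL0] at this
          linarith
      | succ m =>
        by_cases hm : m + 1 ≤ q
        · rw [hfsucc m hm]
          set B := A (q - (m+1)) with hB
          set C := A (q - (m+1) + 1) with hC
          have hCr : C = min (L m) (B - p (π m)) := hrec m hm
          have hsB : s (π (m+1)) ≤ B := hsAk (m+1) hm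
          have hBL : B ≤ L (m+1) := hALk (m+1) hm
          constructor
          · have hCB : C ≤ B - p (π m) := hCr ▸ min_le_right _ _
            have : max (s (π (m+1))) (C + p (π m)) ≤ B := max_le hsB (by linarith)
            linarith
          · rcases min_cases (L m) (B - p (π m)) with ⟨h1, h2⟩ | ⟨h1, h2⟩
            · have hCL : C = L m := by rw [hCr, h1]
              have : L (m+1) - Δmax ≤ max (s (π (m+1))) (C + p (π m)) := by
                rw [hLsucc m, hCL]; linarith [le_refl (max (s (π (m+1))) (L m + p (π m)))]
              linarith
            · have hCB : C = B - p (π m) := by rw [hCr, h1]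
              have : B ≤ max (s (π (m+1))) (C + p (π m)) := by
                rw [hCB]
                have := le_max_right (s (π (m+1))) (B - p (π m) + p (π m))
                linarith
              linarith
        · have : f (m+1) = 0 := by simp [hfdef, hm]
          rw [this]; exact ⟨le_refl 0, hΔmax⟩
    exact this
  · have hreal : ∀ k, k ≤ q → realised p π s Δ k = A (q - k) := by
      intro k
      induction k with
      | zero =>
        intro _
        show s (π 0) + Δ (π 0) = A (q - 0)
        rw [hΔπ 0, hf0]
        simp
      | succ m ih =>
        intro hk
        have hm : m ≤ q := by omega
        show max (s (π (m+1))) (realised p π s Δ m + p (π m)) + Δ (π (m+1)) = A (q - (m+1))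
        rw [ih hm, hΔπ (m+1), hfsucc m hk]
        have e : q - m = q - (m+1) + 1 := by omega
        rw [e]
        ring
    intro k hk
    rw [hreal k hk]
    rfl
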